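/- Let R be a commutative ring and let J(R) denote its Jacobson radical. The maximal spectrum Specm(R), equipped with the subspace topology induced from the Zariski topology on Spec(R), is Hausdorff if and only if the quotient ring R/J(R) is a Gelfand ring. -/

import Mathlib

/-- A commutative ring `R` is a Gelfand ring if for any two distinct maximal ideals
`m`, `m'` there are `a ∉ m`, `a' ∉ m'` with `a * a' = 0`. -/
def IsGelfandRing (R : Type*) [CommRing R] : Prop :=
  ∀ m m' : Ideal R, m.IsMaximal → m'.IsMaximal → m ≠ m' →
    ∃ a a' : R, a ∉ m ∧ a' ∉ m' ∧ a * a' = 0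

section Aux

variable {R : Type*} [CommRing R]

lemma jacobson_le_maximal {N : Ideal R} (hN : N.IsMaximal) :
    (⊥ : Ideal R).jacobson ≤ N :=
  sInf_le ⟨bot_le, hN⟩

lemma mem_jacobson_of_forall {x : R}
    (h : ∀ N : Ideal R, N.IsMaximal → x ∈ N) : x ∈ (⊥ : Ideal R).jacobson := by
  rw [Ideal.jacobson]
  exact Submodule.mem_sInf.mpr fun N ⟨_, hN⟩ => h N hN

end Aux

/-- The maximal spectrum of a commutative ring `R` (with the Zariski topology) is
Hausdorff if and only if `R / J(R)` is a Gelfand ring, where `J(R)` is the Jacobson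
radical of `R`. -/
theorem maximalSpectrum_t2_iff_quotient_jacobson_gelfand (R : Type*) [CommRing R] :
    T2Space (MaximalSpectrum R) ↔ IsGelfandRing (R ⧸ (⊥ : Ideal R).jacobson) := by
  set J := (⊥ : Ideal R).jacobson with hJ
  have hker : RingHom.ker (Ideal.Quotient.mk J) = J := Ideal.mk_ker
  have hsurj : Function.Surjective (Ideal.Quotient.mk J) := Ideal.Quotient.mk_surjective
  constructor
  · intro hT2 m m' hm hm' hne
    haveI := hm; haveI := hm'
    have hM : (Ideal.comap (Ideal.Quotient.mk J) m).IsMaximal :=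
      Ideal.comap_isMaximal_of_surjective _ hsurj
    have hM' : (Ideal.comap (Ideal.Quotient.mk J) m').IsMaximal :=
      Ideal.comap_isMaximal_of_surjective _ hsurj
    set x : MaximalSpectrum R := ⟨_, hM⟩
    set y : MaximalSpectrum R := ⟨_, hM'⟩
    have hxy : x ≠ y := by
      intro h
      apply hne
      have : Ideal.comap (Ideal.Quotient.mk J) m = Ideal.comap (Ideal.Quotient.mk J) m' :=
        congrArg MaximalSpectrum.asIdeal h
      calc m = Ideal.map (Ideal.Quotient.mk J) (Ideal.comap (Ideal.Quotient.mk J) m) :=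
              (Ideal.map_comap_of_surjective _ hsurj m).symm
        _ = Ideal.map (Ideal.Quotient.mk J) (Ideal.comap (Ideal.Quotient.mk J) m') := by rw [this]
        _ = m' := Ideal.map_comap_of_surjective _ hsurj m'
    obtain ⟨U, V, hU, hV, hxU, hyV, hUV⟩ := hT2.t2 hxy
    obtain ⟨U', hU', rfl⟩ := isOpen_induced_iff.mp hU
    obtain ⟨V', hV', rfl⟩ := isOpen_induced_iff.mp hV
    obtain ⟨Ba, ⟨a, rfl⟩, hxa, haU⟩ :=
      PrimeSpectrum.isTopologicalBasis_basic_opens.exists_subset_of_mem_open hxU hU'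
    obtain ⟨Ba', ⟨a', rfl⟩, hya', ha'V⟩ :=
      PrimeSpectrum.isTopologicalBasis_basic_opens.exists_subset_of_mem_open hyV hV'
    refine ⟨Ideal.Quotient.mk J a, Ideal.Quotient.mk J a', ?_, ?_, ?_⟩
    · exact fun h => (show a ∉ x.asIdeal from hxa) h
    · exact fun h => (show a' ∉ y.asIdeal from hya') h
    · rw [← map_mul, Ideal.Quotient.eq_zero_iff_mem]
      apply mem_jacobson_of_forall
      intro N hN
      by_contra h
      have ha : a ∉ N := fun ha => h (Ideal.mul_mem_right _ _ ha)
      have ha' : a' ∉ N := fun ha' => h (Ideal.mul_mem_left _ _ ha')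
      set z : MaximalSpectrum R := ⟨N, hN⟩
      have hz1 : z ∈ MaximalSpectrum.toPrimeSpectrum ⁻¹' U' :=
        haU (show a ∉ z.asIdeal from ha)
      have hz2 : z ∈ MaximalSpectrum.toPrimeSpectrum ⁻¹' V' :=
        ha'V (show a' ∉ z.asIdeal from ha')
      exact hUV.ne_of_mem hz1 hz2 rfl
  · intro hG
    constructor
    intro x y hxy
    have hxm : (Ideal.map (Ideal.Quotient.mk J) x.asIdeal).IsMaximal := by
      rcases Ideal.map_eq_top_or_isMaximal_of_surjective _ hsurj x.isMaximal with h | h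
      · exfalso
        have := congrArg (Ideal.comap (Ideal.Quotient.mk J)) h
        rw [Ideal.comap_map_of_surjective _ hsurj, ← RingHom.ker_eq_comap_bot, hker,
          Ideal.comap_top, sup_eq_left.mpr (jacobson_le_maximal x.isMaximal)] at this
        exact x.isMaximal.ne_top this
      · exact h
    have hym : (Ideal.map (Ideal.Quotient.mk J) y.asIdeal).IsMaximal := by
      rcases Ideal.map_eq_top_or_isMaximal_of_surjective _ hsurj y.isMaximal with h | h
      · exfalso
        have := congrArg (Ideal.comap (Ideal.Quotient.mk J)) h
        rw [Ideal.comap_map_of_surjective _ hsurj, ← RingHom.ker_eq_comap_bot, hker,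
          Ideal.comap_top, sup_eq_left.mpr (jacobson_le_maximal y.isMaximal)] at this
        exact y.isMaximal.ne_top this
      · exact h
    have hcomap : ∀ z : MaximalSpectrum R,
        Ideal.comap (Ideal.Quotient.mk J) (Ideal.map (Ideal.Quotient.mk J) z.asIdeal)
          = z.asIdeal := by
      intro z
      rw [Ideal.comap_map_of_surjective _ hsurj, ← RingHom.ker_eq_comap_bot, hker,
        sup_eq_left.mpr (jacobson_le_maximal z.isMaximal)]
    have hmm : Ideal.map (Ideal.Quotient.mk J) x.asIdeal ≠
        Ideal.map (Ideal.Quotient.mk J) y.asIdeal := by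
      intro h
      apply hxy
      ext1
      rw [← hcomap x, ← hcomap y, h]
    obtain ⟨b, b', hb, hb', hmul⟩ := hG _ _ hxm hym hmm
    obtain ⟨a, rfl⟩ := hsurj b
    obtain ⟨a', rfl⟩ := hsurj b'
    have hax : a ∉ x.asIdeal := fun h => hb (Ideal.mem_map_of_mem _ h)
    have hay : a' ∉ y.asIdeal := fun h => hb' (Ideal.mem_map_of_mem _ h)
    have hJmem : a * a' ∈ J := by
      rw [← Ideal.Quotient.eq_zero_iff_mem, map_mul]; exact hmul
    refine ⟨MaximalSpectrum.toPrimeSpectrum ⁻¹' (PrimeSpectrum.basicOpen a),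
      MaximalSpectrum.toPrimeSpectrum ⁻¹' (PrimeSpectrum.basicOpen a'), ?_, ?_, ?_, ?_, ?_⟩
    · exact (PrimeSpectrum.isOpen_basicOpen).preimage MaximalSpectrum.toPrimeSpectrum_continuous
    · exact (PrimeSpectrum.isOpen_basicOpen).preimage MaximalSpectrum.toPrimeSpectrum_continuous
    · exact hax
    · exact hay
    · rw [Set.disjoint_left]
      rintro z hz hz'
      have h1 : a ∉ z.asIdeal := hz
      have h2 : a' ∉ z.asIdeal := hz'
      have : a * a' ∈ z.asIdeal := jacobson_le_maximal z.isMaximal hJmem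
      rcases z.isMaximal.isPrime.mem_or_mem this with h | h
      · exact h1 h
      · exact h2 h
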